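/- Let d ≥ 1, β > 0 and let U = V + g satisfy assumptions (A0) and (A1). Then for every a ∈ ℝ^{2d} and all indices i, j in {1,…,2d}: −C₀·C₂·Var_{ν_a}(id) ≤ Cov_{ν_a}( V'(a_i − ·), g'(a_j − ·) ) ≤ 0. -/

import Mathlib

open MeasureTheory Real Filter

noncomputable section

/-- Boltzmann weight of the single odd site given the `2d` neighbouring values `a`. -/
def siteWeight (β : ℝ) (d : ℕ) (U : ℝ → ℝ) (a : Fin (2*d) → ℝ) (t : ℝ) : ℝ :=
  Real.exp (-(2*β) * ∑ k, U (a k - t))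

/-- Normalising constant `Z_a`. -/
def Zsite (β : ℝ) (d : ℕ) (U : ℝ → ℝ) (a : Fin (2*d) → ℝ) : ℝ :=
  ∫ t : ℝ, siteWeight β d U a t

/-- Single-site measure `ν_a`. -/
def nuSite (β : ℝ) (d : ℕ) (U : ℝ → ℝ) (a : Fin (2*d) → ℝ) : Measure ℝ :=
  volume.withDensity fun t => ENNReal.ofReal (siteWeight β d U a t / Zsite β d U a)

/-- Coarse-grained potential `F(a) = -log Z_a`. -/
def Fcg (β : ℝ) (d : ℕ) (U : ℝ → ℝ) (a : Fin (2*d) → ℝ) : ℝ :=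
  - Real.log (Zsite β d U a)

/-- Covariance of two functions under a measure on `ℝ`. -/
def covM (ν : Measure ℝ) (f g : ℝ → ℝ) : ℝ :=
  (∫ t, f t * g t ∂ν) - (∫ t, f t ∂ν) * (∫ t, g t ∂ν)

/-- Variance of the identity function under a measure on `ℝ`. -/
def varId (ν : Measure ℝ) : ℝ := covM ν (fun t => t) (fun t => t)

/-- First partial derivative. -/
def pd {n : ℕ} (Φ : (Fin n → ℝ) → ℝ) (i : Fin n) (a : Fin n → ℝ) : ℝ :=
  fderiv ℝ Φ a (Pi.single i 1)

/-- Second partial derivative. -/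
def pd2 {n : ℕ} (Φ : (Fin n → ℝ) → ℝ) (i j : Fin n) (a : Fin n → ℝ) : ℝ :=
  fderiv ℝ (fun x => fderiv ℝ Φ x (Pi.single i 1)) a (Pi.single j 1)

lemma gauss_integrable {b : ℝ} (hb : 0 < b) (n : ℕ) (c : ℝ) :
    Integrable (fun t : ℝ => (t - c) ^ n * Real.exp (-b * (t - c) ^ 2)) := by
  have h : Integrable (fun x : ℝ => x ^ n * Real.exp (-b * x ^ 2)) := by
    have hn : (-1 : ℝ) < (n : ℝ) :=
      lt_of_lt_of_le (by norm_num) (Nat.cast_nonneg n)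
    simpa [Real.rpow_natCast] using integrable_rpow_mul_exp_neg_mul_sq hb hn
  exact h.comp_sub_right c

lemma poly_gauss_integrable {b : ℝ} (hb : 0 < b) (c : ℝ) :
    Integrable (fun t : ℝ => (1 + (t - c) ^ 2) ^ 2 * Real.exp (-b * (t - c) ^ 2)) := by
  have h0 := gauss_integrable hb 0 c
  have h2 := gauss_integrable hb 2 c
  have h4 := gauss_integrable hb 4 c
  refine ((h0.add (h2.const_mul 2)).add h4).congr (ae_of_all _ fun t => ?_)
  simp only [Pi.add_apply]
  ring

lemma dominated_integrable {b : ℝ} (hb : 0 < b) {c M K : ℝ} {w φ : ℝ → ℝ}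
    (hw : Continuous w) (hφ : Continuous φ)
    (hwb : ∀ t, |w t| ≤ M * Real.exp (-b * (t - c) ^ 2))
    (hφb : ∀ t, |φ t| ≤ K * (1 + (t - c) ^ 2) ^ 2) :
    Integrable (fun t => φ t * w t) := by
  have hK : 0 ≤ K := by
    have h := hφb c
    simp at h
    exact (abs_nonneg _).trans h
  have hM : 0 ≤ M := by
    have h := hwb c
    simp at h
    exact (abs_nonneg _).trans h
  refine ((poly_gauss_integrable hb c).const_mul (K * M)).mono'
    ((hφ.mul hw).aestronglyMeasurable) (ae_of_all _ fun t => ?_)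
  rw [Real.norm_eq_abs, abs_mul]
  calc |φ t| * |w t| ≤ (K * (1 + (t - c) ^ 2) ^ 2) * (M * Real.exp (-b * (t - c) ^ 2)) :=
        mul_le_mul (hφb t) (hwb t) (abs_nonneg _) (by positivity)
    _ = K * M * ((1 + (t - c) ^ 2) ^ 2 * Real.exp (-b * (t - c) ^ 2)) := by ring

lemma cov_double (ν : Measure ℝ) [IsProbabilityMeasure ν] {φ ψ : ℝ → ℝ}
    (hφ : Integrable φ ν) (hψ : Integrable ψ ν)
    (hφψ : Integrable (fun t => φ t * ψ t) ν) :
    Integrable (fun p : ℝ × ℝ => (φ p.1 - φ p.2) * (ψ p.1 - ψ p.2)) (ν.prod ν) ∧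
    ∫ p : ℝ × ℝ, (φ p.1 - φ p.2) * (ψ p.1 - ψ p.2) ∂(ν.prod ν) = 2 * covM ν φ ψ := by
  have e1 : Integrable (fun p : ℝ × ℝ => (φ p.1 * ψ p.1) * 1) (ν.prod ν) :=
    hφψ.mul_prod (integrable_const 1)
  have e2 : Integrable (fun p : ℝ × ℝ => 1 * (φ p.2 * ψ p.2)) (ν.prod ν) :=
    (integrable_const 1).mul_prod hφψ
  have e3 : Integrable (fun p : ℝ × ℝ => φ p.1 * ψ p.2) (ν.prod ν) := hφ.mul_prod hψ
  have e4 : Integrable (fun p : ℝ × ℝ => ψ p.1 * φ p.2) (ν.prod ν) := hψ.mul_prod hφ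
  have hfun : (fun p : ℝ × ℝ => (φ p.1 - φ p.2) * (ψ p.1 - ψ p.2))
      = fun p : ℝ × ℝ =>
        ((φ p.1 * ψ p.1) * 1 + 1 * (φ p.2 * ψ p.2)) - (φ p.1 * ψ p.2 + ψ p.1 * φ p.2) := by
    funext p; ring
  have hint : Integrable (fun p : ℝ × ℝ => (φ p.1 - φ p.2) * (ψ p.1 - ψ p.2)) (ν.prod ν) := by
    rw [hfun]; exact (e1.add e2).sub (e3.add e4)
  refine ⟨hint, ?_⟩
  have I1 : (∫ p : ℝ × ℝ, (φ p.1 * ψ p.1) * 1 ∂(ν.prod ν))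
      = (∫ t, φ t * ψ t ∂ν) * (∫ _t : ℝ, (1 : ℝ) ∂ν) :=
    integral_prod_mul (fun t => φ t * ψ t) (fun _ => (1 : ℝ))
  have I2 : (∫ p : ℝ × ℝ, 1 * (φ p.2 * ψ p.2) ∂(ν.prod ν))
      = (∫ _t : ℝ, (1 : ℝ) ∂ν) * (∫ t, φ t * ψ t ∂ν) :=
    integral_prod_mul (fun _ => (1 : ℝ)) (fun t => φ t * ψ t)
  have I3 : (∫ p : ℝ × ℝ, φ p.1 * ψ p.2 ∂(ν.prod ν)) = (∫ t, φ t ∂ν) * (∫ t, ψ t ∂ν) :=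
    integral_prod_mul φ ψ
  have I4 : (∫ p : ℝ × ℝ, ψ p.1 * φ p.2 ∂(ν.prod ν)) = (∫ t, ψ t ∂ν) * (∫ t, φ t ∂ν) :=
    integral_prod_mul ψ φ
  have hone : (∫ _t : ℝ, (1 : ℝ) ∂ν) = 1 := by simp
  have hsub : (∫ p : ℝ × ℝ,
        (((φ p.1 * ψ p.1) * 1 + 1 * (φ p.2 * ψ p.2)) - (φ p.1 * ψ p.2 + ψ p.1 * φ p.2))
        ∂(ν.prod ν))
      = (∫ p : ℝ × ℝ, ((φ p.1 * ψ p.1) * 1 + 1 * (φ p.2 * ψ p.2)) ∂(ν.prod ν))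
        - ∫ p : ℝ × ℝ, (φ p.1 * ψ p.2 + ψ p.1 * φ p.2) ∂(ν.prod ν) :=
    integral_sub (e1.add e2) (e3.add e4)
  have hadd1 : (∫ p : ℝ × ℝ, ((φ p.1 * ψ p.1) * 1 + 1 * (φ p.2 * ψ p.2)) ∂(ν.prod ν))
      = (∫ p : ℝ × ℝ, (φ p.1 * ψ p.1) * 1 ∂(ν.prod ν))
        + ∫ p : ℝ × ℝ, 1 * (φ p.2 * ψ p.2) ∂(ν.prod ν) := integral_add e1 e2
  have hadd2 : (∫ p : ℝ × ℝ, (φ p.1 * ψ p.2 + ψ p.1 * φ p.2) ∂(ν.prod ν))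
      = (∫ p : ℝ × ℝ, φ p.1 * ψ p.2 ∂(ν.prod ν))
        + ∫ p : ℝ × ℝ, ψ p.1 * φ p.2 ∂(ν.prod ν) := integral_add e3 e4
  rw [hfun, hsub, hadd1, hadd2, I1, I2, I3, I4, hone, covM]
  ring

set_option maxHeartbeats 2000000 in
/-- **Statement 14** (bounds on the `V'-g'` covariance in terms of the variance). -/
theorem statement14
    {d : ℕ} {β A B C₀ C₁ C₂ : ℝ} {U V g : ℝ → ℝ}
    (hd : 1 ≤ d) (hβ : 0 < β)
    -- (A0)
    (hUcont : Continuous U) (hA : 0 < A) (hA0 : ∀ η : ℝ, A * η ^ 2 - B ≤ U η)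
    -- (A1)
    (hsum : ∀ s, U s = V s + g s)
    (hV : ContDiff ℝ 2 V) (hg : ContDiff ℝ 2 g)
    (hC₁ : 0 < C₁) (hC₁₂ : C₁ < C₂) (hC₂₀ : C₂ < C₀)
    (hV'' : ∀ s, C₁ ≤ deriv (deriv V) s ∧ deriv (deriv V) s ≤ C₂)
    (hg'' : ∀ s, -C₀ ≤ deriv (deriv g) s ∧ deriv (deriv g) s ≤ 0) :
    ∀ (a : Fin (2*d) → ℝ) (i j : Fin (2*d)),
      -(C₀ * C₂ * varId (nuSite β d U a))
          ≤ covM (nuSite β d U a)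
              (fun t => deriv V (a i - t)) (fun t => deriv g (a j - t)) ∧
      covM (nuSite β d U a)
              (fun t => deriv V (a i - t)) (fun t => deriv g (a j - t)) ≤ 0 := by
  intro a i j
  have hC₂0 : 0 < C₂ := hC₁.trans hC₁₂
  have hC₀0 : 0 < C₀ := hC₂0.trans hC₂₀
  -- smoothness facts
  have h2V : ContDiff ℝ ((1 : WithTop ℕ∞) + 1) V := by
    have : ((1 : WithTop ℕ∞) + 1) = 2 := by norm_num
    rw [this]; exact hV
  have h2g : ContDiff ℝ ((1 : WithTop ℕ∞) + 1) g := by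
    have : ((1 : WithTop ℕ∞) + 1) = 2 := by norm_num
    rw [this]; exact hg
  have hdV1 : ContDiff ℝ 1 (deriv V) := (contDiff_succ_iff_deriv.mp h2V).2.2
  have hdg1 : ContDiff ℝ 1 (deriv g) := (contDiff_succ_iff_deriv.mp h2g).2.2
  have hdVdiff : Differentiable ℝ (deriv V) := hdV1.differentiable one_ne_zero
  have hdgdiff : Differentiable ℝ (deriv g) := hdg1.differentiable one_ne_zero
  have hdVcont : Continuous (deriv V) := hdV1.continuous
  have hdgcont : Continuous (deriv g) := hdg1.continuous
  -- Lipschitz bounds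
  have hVlip : ∀ x y, |deriv V x - deriv V y| ≤ C₂ * |x - y| := by
    intro x y
    have hl : LipschitzWith C₂.toNNReal (deriv V) := by
      refine lipschitzWith_of_nnnorm_deriv_le hdVdiff (fun s => ?_)
      rw [← NNReal.coe_le_coe, coe_nnnorm, Real.norm_eq_abs, Real.coe_toNNReal _ hC₂0.le]
      exact abs_le.mpr ⟨by linarith [(hV'' s).1], (hV'' s).2⟩
    have := hl.dist_le_mul x y
    rwa [Real.dist_eq, Real.dist_eq, Real.coe_toNNReal _ hC₂0.le] at this
  have hglip : ∀ x y, |deriv g x - deriv g y| ≤ C₀ * |x - y| := by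
    intro x y
    have hl : LipschitzWith C₀.toNNReal (deriv g) := by
      refine lipschitzWith_of_nnnorm_deriv_le hdgdiff (fun s => ?_)
      rw [← NNReal.coe_le_coe, coe_nnnorm, Real.norm_eq_abs, Real.coe_toNNReal _ hC₀0.le]
      exact abs_le.mpr ⟨(hg'' s).1, le_trans (hg'' s).2 hC₀0.le⟩
    have := hl.dist_le_mul x y
    rwa [Real.dist_eq, Real.dist_eq, Real.coe_toNNReal _ hC₀0.le] at this
  -- monotonicity
  have hVmono : Monotone (deriv V) :=
    (strictMono_of_deriv_pos fun x => lt_of_lt_of_le hC₁ (hV'' x).1).monotone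
  have hganti : Antitone (deriv g) :=
    antitone_of_deriv_nonpos hdgdiff (fun x => (hg'' x).2)
  -- the weight
  have hn : 0 < 2*d := by omega
  set i₀ : Fin (2*d) := ⟨0, hn⟩ with hi₀
  set c : ℝ := a i₀ with hc
  set w : ℝ → ℝ := siteWeight β d U a with hw
  have hwpos : ∀ t, 0 < w t := fun t => Real.exp_pos _
  have hScont : Continuous fun t : ℝ => ∑ k, U (a k - t) :=
    continuous_finset_sum _ fun k _ => hUcont.comp (continuous_const.sub continuous_id)
  have hwcont : Continuous w := Real.continuous_exp.comp (continuous_const.mul hScont)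
  have hb0 : (0:ℝ) < 2*β*A := by positivity
  have hwb : ∀ t, |w t| ≤ Real.exp (2*β*(2*d)*B) * Real.exp (-(2*β*A) * (t - c) ^ 2) := by
    intro t
    rw [abs_of_pos (hwpos t), hw, siteWeight, ← Real.exp_add]
    apply Real.exp_le_exp.mpr
    have hsum_ge : A * (c - t) ^ 2 - (2*d) * B ≤ ∑ k, U (a k - t) := by
      have h2 : (∑ k : Fin (2*d), (A * (a k - t) ^ 2 - B)) ≤ ∑ k, U (a k - t) :=
        Finset.sum_le_sum fun k _ => hA0 _
      have hsingle : A * (c - t) ^ 2 ≤ ∑ k : Fin (2*d), A * (a k - t) ^ 2 :=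
        Finset.single_le_sum (f := fun k : Fin (2*d) => A * (a k - t) ^ 2)
          (fun k _ => by positivity) (Finset.mem_univ i₀)
      have h3 : (∑ k : Fin (2*d), (A * (a k - t) ^ 2 - B))
          = (∑ k : Fin (2*d), A * (a k - t) ^ 2) - (2*d) * B := by
        rw [Finset.sum_sub_distrib, Finset.sum_const, Finset.card_univ, Fintype.card_fin,
          nsmul_eq_mul]
        push_cast
        ring
      linarith
    have hmul := mul_le_mul_of_nonneg_left hsum_ge (by positivity : (0:ℝ) ≤ 2*β)
    nlinarith [hmul]
  -- integrability against the weight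
  have hIw : ∀ (φ : ℝ → ℝ) (K : ℝ), Continuous φ →
      (∀ t, |φ t| ≤ K * (1 + (t - c) ^ 2) ^ 2) → Integrable (fun t => φ t * w t) :=
    fun φ K hφc hφK => dominated_integrable hb0 hwcont hφc hwb hφK
  have hone_bound : ∀ t : ℝ, |(1:ℝ)| ≤ 1 * (1 + (t - c) ^ 2) ^ 2 := by
    intro t; rw [abs_one, one_mul]; nlinarith [sq_nonneg (t - c), sq_nonneg ((t-c)^2)]
  have hZint : Integrable w := by
    have := hIw (fun _ => 1) 1 continuous_const hone_bound
    simpa using this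
  have hZpos : 0 < Zsite β d U a := by
    rw [Zsite]
    rw [integral_pos_iff_support_of_nonneg (fun t => (hwpos t).le) hZint]
    have hsupp : Function.support w = Set.univ := Set.eq_univ_of_forall fun t => (hwpos t).ne'
    rw [hsupp]
    simp [Real.volume_univ]
  set ν : Measure ℝ := nuSite β d U a with hν
  have hρmeas : Measurable fun t => ENNReal.ofReal (siteWeight β d U a t / Zsite β d U a) :=
    ((hwcont.div_const _).measurable).ennreal_ofReal
  have hρnn : ∀ t, 0 ≤ siteWeight β d U a t / Zsite β d U a :=
    fun t => div_nonneg (hwpos t).le hZpos.le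
  haveI hP : IsProbabilityMeasure ν := by
    constructor
    rw [hν, nuSite, withDensity_apply _ MeasurableSet.univ, Measure.restrict_univ,
      ← ofReal_integral_eq_lintegral_ofReal (hZint.div_const (Zsite β d U a))
        (ae_of_all _ hρnn)]
    rw [integral_div]
    rw [show (∫ t, siteWeight β d U a t) = Zsite β d U a from rfl]
    rw [div_self hZpos.ne', ENNReal.ofReal_one]
  have hIν : ∀ (φ : ℝ → ℝ) (K : ℝ), Continuous φ →
      (∀ t, |φ t| ≤ K * (1 + (t - c) ^ 2) ^ 2) → Integrable φ ν := by
    intro φ K hφc hφK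
    rw [hν, nuSite,
      integrable_withDensity_iff hρmeas (ae_of_all _ fun t => ENNReal.ofReal_lt_top)]
    refine ((hIw φ K hφc hφK).div_const (Zsite β d U a)).congr (ae_of_all _ fun t => ?_)
    dsimp only
    rw [ENNReal.toReal_ofReal (hρnn t)]
    ring
  -- the two functions
  set f : ℝ → ℝ := fun t => deriv V (a i - t) with hf
  set h : ℝ → ℝ := fun t => deriv g (a j - t) with hh
  have hfcont : Continuous f := hdVcont.comp (continuous_const.sub continuous_id)
  have hhcont : Continuous h := hdgcont.comp (continuous_const.sub continuous_id)
  have habs : ∀ x : ℝ, |x| ≤ 1 + x ^ 2 := by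
    intro x; nlinarith [sq_abs x, sq_nonneg (|x| - 1), abs_nonneg x]
  have hone_le : ∀ x : ℝ, (1:ℝ) ≤ 1 + x ^ 2 := fun x => by nlinarith [sq_nonneg x]
  -- linear growth bounds
  set Kf : ℝ := |f c| + C₂ with hKf
  set Kh : ℝ := |h c| + C₀ with hKh
  have hflip : ∀ s t, |f s - f t| ≤ C₂ * |s - t| := by
    intro s t
    have h1 := hVlip (a i - s) (a i - t)
    have e : (a i - s) - (a i - t) = t - s := by ring
    rw [e, abs_sub_comm t s] at h1
    exact h1
  have hhlip : ∀ s t, |h s - h t| ≤ C₀ * |s - t| := by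
    intro s t
    have h1 := hglip (a j - s) (a j - t)
    have e : (a j - s) - (a j - t) = t - s := by ring
    rw [e, abs_sub_comm t s] at h1
    exact h1
  have hfb : ∀ t, |f t| ≤ Kf * (1 + (t - c) ^ 2) := by
    intro t
    have h1 : |f t| ≤ |f t - f c| + |f c| := by
      linarith [abs_sub_abs_le_abs_sub (f t) (f c)]
    have h2 := hflip t c
    have h3 := habs (t - c)
    have h4 := hone_le (t - c)
    have h5 := abs_nonneg (f c)
    nlinarith [sq_nonneg (t - c)]
  have hhb : ∀ t, |h t| ≤ Kh * (1 + (t - c) ^ 2) := by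
    intro t
    have h1 : |h t| ≤ |h t - h c| + |h c| := by
      linarith [abs_sub_abs_le_abs_sub (h t) (h c)]
    have h2 := hhlip t c
    have h3 := habs (t - c)
    have h4 := hone_le (t - c)
    have h5 := abs_nonneg (h c)
    nlinarith [sq_nonneg (t - c)]
  have hKf0 : 0 ≤ Kf := by rw [hKf]; positivity
  have hKh0 : 0 ≤ Kh := by rw [hKh]; positivity
  have hfb2 : ∀ t, |f t| ≤ Kf * (1 + (t - c) ^ 2) ^ 2 := by
    intro t
    have h1 := hfb t
    have h2 := hone_le (t - c)
    have h3 : Kf * (1 + (t - c) ^ 2) * 1 ≤ Kf * (1 + (t - c) ^ 2) * (1 + (t - c) ^ 2) :=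
      mul_le_mul_of_nonneg_left h2 (mul_nonneg hKf0 (by positivity))
    nlinarith [h3]
  have hhb2 : ∀ t, |h t| ≤ Kh * (1 + (t - c) ^ 2) ^ 2 := by
    intro t
    have h1 := hhb t
    have h2 := hone_le (t - c)
    have h3 : Kh * (1 + (t - c) ^ 2) * 1 ≤ Kh * (1 + (t - c) ^ 2) * (1 + (t - c) ^ 2) :=
      mul_le_mul_of_nonneg_left h2 (mul_nonneg hKh0 (by positivity))
    nlinarith [h3]
  have hfhb2 : ∀ t, |f t * h t| ≤ (Kf * Kh) * (1 + (t - c) ^ 2) ^ 2 := by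
    intro t
    rw [abs_mul]
    calc |f t| * |h t| ≤ (Kf * (1 + (t - c) ^ 2)) * (Kh * (1 + (t - c) ^ 2)) :=
          mul_le_mul (hfb t) (hhb t) (abs_nonneg _) (mul_nonneg hKf0 (by positivity))
      _ = (Kf * Kh) * (1 + (t - c) ^ 2) ^ 2 := by ring
  have hid1 : ∀ t : ℝ, |t| ≤ (1 + |c|) * (1 + (t - c) ^ 2) := by
    intro t
    have h1 : |t| ≤ |t - c| + |c| := by
      linarith [abs_sub_abs_le_abs_sub t c]
    have h2 := habs (t - c)
    have h3 := hone_le (t - c)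
    have h4 : |c| * 1 ≤ |c| * (1 + (t - c) ^ 2) :=
      mul_le_mul_of_nonneg_left h3 (abs_nonneg c)
    nlinarith [h4]
  have hidb2 : ∀ t : ℝ, |(fun t : ℝ => t) t| ≤ (1 + |c|) * (1 + (t - c) ^ 2) ^ 2 := by
    intro t
    show |t| ≤ (1 + |c|) * (1 + (t - c) ^ 2) ^ 2
    have h1 := hid1 t
    have h3 := hone_le (t - c)
    have h5 : ((1 + |c|) * (1 + (t - c) ^ 2)) * 1
        ≤ ((1 + |c|) * (1 + (t - c) ^ 2)) * (1 + (t - c) ^ 2) := by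
      refine mul_le_mul_of_nonneg_left h3 ?_
      have := abs_nonneg c
      positivity
    nlinarith [h5]
  have hid2b2 : ∀ t : ℝ, |t * t| ≤ (1 + |c|) ^ 2 * (1 + (t - c) ^ 2) ^ 2 := by
    intro t
    rw [abs_mul]
    have h1 := hid1 t
    calc |t| * |t| ≤ ((1 + |c|) * (1 + (t - c) ^ 2)) * ((1 + |c|) * (1 + (t - c) ^ 2)) :=
          mul_le_mul h1 h1 (abs_nonneg _) (by positivity)
      _ = (1 + |c|) ^ 2 * (1 + (t - c) ^ 2) ^ 2 := by ring
  -- integrability wrt ν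
  have hfI : Integrable f ν := hIν f Kf hfcont hfb2
  have hhI : Integrable h ν := hIν h Kh hhcont hhb2
  have hfhI : Integrable (fun t => f t * h t) ν :=
    hIν (fun t => f t * h t) (Kf * Kh) (hfcont.mul hhcont) hfhb2
  have hidI : Integrable (fun t : ℝ => t) ν := hIν (fun t => t) (1 + |c|) continuous_id hidb2
  have hid2I : Integrable (fun t : ℝ => t * t) ν :=
    hIν (fun t => t * t) ((1 + |c|) ^ 2) (continuous_id.mul continuous_id) hid2b2
  obtain ⟨hPint, hPeq⟩ := cov_double ν hfI hhI hfhI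
  obtain ⟨hQint, hQeq⟩ := cov_double ν hidI hidI hid2I
  -- pointwise estimates
  have hfanti : Antitone f := fun s t hst => hVmono (by show a i - t ≤ a i - s; linarith)
  have hhmono : Monotone h := fun s t hst => hganti (by show a j - t ≤ a j - s; linarith)
  have hpt1 : ∀ s t : ℝ, (f s - f t) * (h s - h t) ≤ 0 := by
    intro s t
    rcases le_total s t with hst | hst
    · nlinarith [hfanti hst, hhmono hst]
    · nlinarith [hfanti hst, hhmono hst]
  have hpt2 : ∀ s t : ℝ, (-(C₀ * C₂)) * ((s - t) * (s - t)) ≤ (f s - f t) * (h s - h t) := by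
    intro s t
    have h3 : |(f s - f t) * (h s - h t)| ≤ (C₂ * |s - t|) * (C₀ * |s - t|) := by
      rw [abs_mul]
      exact mul_le_mul (hflip s t) (hhlip s t) (abs_nonneg _) (by positivity)
    have h4 := neg_abs_le ((f s - f t) * (h s - h t))
    have h5 : |s - t| * |s - t| = (s - t) * (s - t) := abs_mul_abs_self (s - t)
    have h6 : (C₂ * |s - t|) * (C₀ * |s - t|) = (C₀ * C₂) * ((s - t) * (s - t)) := by
      rw [show (C₂ * |s - t|) * (C₀ * |s - t|) = (C₀ * C₂) * (|s - t| * |s - t|) from by ring,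
        h5]
    linarith [h3, h4]
  -- conclude
  have hup : ∫ p : ℝ × ℝ, (f p.1 - f p.2) * (h p.1 - h p.2) ∂(ν.prod ν) ≤ 0 :=
    integral_nonpos fun p => hpt1 p.1 p.2
  have hlow : ∫ p : ℝ × ℝ, (-(C₀ * C₂)) * ((p.1 - p.2) * (p.1 - p.2)) ∂(ν.prod ν)
      ≤ ∫ p : ℝ × ℝ, (f p.1 - f p.2) * (h p.1 - h p.2) ∂(ν.prod ν) :=
    integral_mono (hQint.const_mul _) hPint fun p => hpt2 p.1 p.2
  rw [integral_const_mul, hQeq, hPeq] at hlow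
  rw [hPeq] at hup
  have hvar : covM ν (fun t : ℝ => t) (fun t : ℝ => t) = varId ν := rfl
  rw [hvar] at hlow
  constructor
  · linarith
  · linarith

end
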